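/- Let K be a centrally symmetric convex body in ℝⁿ and let x₁,…,x_m (m ≥ 2) be points lying outside the interior of K (i.e. ‖x_i‖_K ≥ 1 for all i), with consecutive points distinct, such that 0 lies in the convex hull of {x₁,…,x_m}. Then the K-length of the closed polygon x₁x₂⋯x_m is at least 4. -/

import Mathlib

open Finset

section CircleLemma
open MeasureTheory Set

noncomputable def Wf (L s : ℝ) : ℝ → ℝ :=
  (Set.Ioc (s - L/2) s ∪ Set.Ioc (s + L/2) L).indicator (fun _ => (1:ℝ))

lemma Wf_mem {L s u : ℝ} (h : u ∈ Set.Ioc (s - L/2) s ∪ Set.Ioc (s + L/2) L) :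
    Wf L s u = 1 := Set.indicator_of_mem h _

lemma Wf_not {L s u : ℝ} (h : u ∉ Set.Ioc (s - L/2) s ∪ Set.Ioc (s + L/2) L) :
    Wf L s u = 0 := Set.indicator_of_notMem h _

lemma Wf_cases (L s u : ℝ) : Wf L s u = 0 ∨ Wf L s u = 1 := by
  unfold Wf Set.indicator
  split <;> simp

lemma Wf_intervalIntegrable (L s a b : ℝ) : IntervalIntegrable (Wf L s) volume a b := by
  apply MeasureTheory.Integrable.intervalIntegrable
  rw [Wf, integrable_indicator_iff (by measurability)]
  rw [integrableOn_const_iff (by simp)]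
  right
  refine lt_of_le_of_lt (measure_union_le _ _) ?_
  rw [Real.volume_Ioc, Real.volume_Ioc]
  exact ENNReal.add_lt_top.2 ⟨ENNReal.ofReal_lt_top, ENNReal.ofReal_lt_top⟩

lemma ind_int {L p q : ℝ} (h0 : 0 ≤ p) (hpq : p ≤ q) (hqL : q ≤ L) :
    ∫ u in (0:ℝ)..L, (Set.Ioc p q).indicator (fun _ => (1:ℝ)) u = q - p := by
  rw [intervalIntegral.integral_of_le (h0.trans (hpq.trans hqL))]
  rw [MeasureTheory.setIntegral_indicator measurableSet_Ioc]
  rw [Set.Ioc_inter_Ioc]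
  rw [MeasureTheory.setIntegral_const]
  rw [Real.volume_real_Ioc]
  rw [smul_eq_mul, mul_one]
  rw [max_eq_right h0, min_eq_right hqL]
  exact max_eq_left (by linarith)

lemma ind_intervalIntegrable (p q a b : ℝ) :
    IntervalIntegrable ((Set.Ioc p q).indicator (fun _ => (1:ℝ))) volume a b := by
  apply MeasureTheory.Integrable.intervalIntegrable
  rw [integrable_indicator_iff measurableSet_Ioc, integrableOn_const_iff (by simp)]
  right; rw [Real.volume_Ioc]; exact ENNReal.ofReal_lt_top

lemma three_blocks {L ti tj p1 q1 p2 q2 p3 q3 : ℝ}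
    (hL : 0 ≤ L)
    (h1 : 0 ≤ p1) (h1' : p1 ≤ q1) (h1'' : q1 ≤ L)
    (h2 : 0 ≤ p2) (h2' : p2 ≤ q2) (h2'' : q2 ≤ L)
    (h3 : 0 ≤ p3) (h3' : p3 ≤ q3) (h3'' : q3 ≤ L)
    (hpt : ∀ u : ℝ, (Set.Ioc p1 q1).indicator (fun _ => (1:ℝ)) u
        + (Set.Ioc p2 q2).indicator (fun _ => (1:ℝ)) u
        + (Set.Ioc p3 q3).indicator (fun _ => (1:ℝ)) u ≤ |Wf L ti u - Wf L tj u|) :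
    (q1 - p1) + (q2 - p2) + (q3 - p3) ≤ ∫ u in (0:ℝ)..L, |Wf L ti u - Wf L tj u| := by
  have key : ∫ u in (0:ℝ)..L, ((Set.Ioc p1 q1).indicator (fun _ => (1:ℝ)) u
      + (Set.Ioc p2 q2).indicator (fun _ => (1:ℝ)) u
      + (Set.Ioc p3 q3).indicator (fun _ => (1:ℝ)) u)
      = (q1 - p1) + (q2 - p2) + (q3 - p3) := by
    rw [intervalIntegral.integral_add ((ind_intervalIntegrable _ _ _ _).add
        (ind_intervalIntegrable _ _ _ _)) (ind_intervalIntegrable _ _ _ _),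
      intervalIntegral.integral_add (ind_intervalIntegrable _ _ _ _)
        (ind_intervalIntegrable _ _ _ _),
      ind_int h1 h1' h1'', ind_int h2 h2' h2'', ind_int h3 h3' h3'']
  rw [← key]
  apply intervalIntegral.integral_mono_on hL
    (((ind_intervalIntegrable _ _ _ _).add (ind_intervalIntegrable _ _ _ _)).add
      (ind_intervalIntegrable _ _ _ _))
    ((Wf_intervalIntegrable L ti 0 L).sub (Wf_intervalIntegrable L tj 0 L)).abs
  exact fun u _ => hpt u

lemma pair_le (L ti tj : ℝ) (h0i : 0 ≤ ti) (hij : ti ≤ tj) (hjL : tj ≤ L) :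
    2 * min (tj - ti) (L - (tj - ti)) ≤ ∫ u in (0:ℝ)..L, |Wf L ti u - Wf L tj u| := by
  have hL : (0:ℝ) ≤ L := h0i.trans (hij.trans hjL)
  rcases le_total tj (L/2) with hj2 | hj2
  · -- case c1 : tj ≤ L/2
    have hpt : ∀ u : ℝ, (Set.Ioc ti tj).indicator (fun _ => (1:ℝ)) u
        + (Set.Ioc (ti + L/2) (tj + L/2)).indicator (fun _ => (1:ℝ)) u
        + (Set.Ioc (0:ℝ) 0).indicator (fun _ => (1:ℝ)) u ≤ |Wf L ti u - Wf L tj u| := by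
      intro u
      have e3 : (Set.Ioc (0:ℝ) 0).indicator (fun _ => (1:ℝ)) u = 0 :=
        Set.indicator_of_notMem (by simp) _
      by_cases b1 : u ∈ Set.Ioc ti tj
      · have hu1 : ti < u := b1.1
        have hu2 : u ≤ tj := b1.2
        have e1 : (Set.Ioc ti tj).indicator (fun _ => (1:ℝ)) u = 1 := Set.indicator_of_mem b1 _
        have e2 : (Set.Ioc (ti + L/2) (tj + L/2)).indicator (fun _ => (1:ℝ)) u = 0 :=
          Set.indicator_of_notMem (by
            simp only [Set.mem_Ioc, not_and, not_le]; intro h; linarith) _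
        have wi : Wf L ti u = 0 := Wf_not (by
          simp only [Set.mem_union, Set.mem_Ioc, not_or, not_and, not_le]
          exact ⟨fun h => by linarith, fun h => by linarith⟩)
        have wj : Wf L tj u = 1 := Wf_mem (Or.inl ⟨by linarith, by linarith⟩)
        rw [e1, e2, e3, wi, wj]; norm_num
      · by_cases b2 : u ∈ Set.Ioc (ti + L/2) (tj + L/2)
        · have hu1 : ti + L/2 < u := b2.1
          have hu2 : u ≤ tj + L/2 := b2.2
          have e1 : (Set.Ioc ti tj).indicator (fun _ => (1:ℝ)) u = 0 :=
            Set.indicator_of_notMem (by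
              simp only [Set.mem_Ioc, not_and, not_le]; intro h; linarith) _
          have e2 : (Set.Ioc (ti + L/2) (tj + L/2)).indicator (fun _ => (1:ℝ)) u = 1 :=
            Set.indicator_of_mem b2 _
          have wi : Wf L ti u = 1 := Wf_mem (Or.inr ⟨by linarith, by linarith⟩)
          have wj : Wf L tj u = 0 := Wf_not (by
            simp only [Set.mem_union, Set.mem_Ioc, not_or, not_and, not_le]
            exact ⟨fun h => by linarith, fun h => by linarith⟩)
          rw [e1, e2, e3, wi, wj]; norm_num
        · have e1 : (Set.Ioc ti tj).indicator (fun _ => (1:ℝ)) u = 0 :=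
            Set.indicator_of_notMem b1 _
          have e2 : (Set.Ioc (ti + L/2) (tj + L/2)).indicator (fun _ => (1:ℝ)) u = 0 :=
            Set.indicator_of_notMem b2 _
          rw [e1, e2, e3]; simp [abs_nonneg]
    have h3b := three_blocks (L := L) (ti := ti) (tj := tj) hL
      h0i hij (by linarith) (by linarith) (by linarith) (by linarith)
      le_rfl le_rfl hL hpt
    have hmin : min (tj - ti) (L - (tj - ti)) = tj - ti := min_eq_left (by linarith)
    rw [hmin]; linarith
  · rcases le_total (L/2) ti with hi2 | hi2
    · -- case c4 : L/2 ≤ ti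
      have hpt : ∀ u : ℝ, (Set.Ioc ti tj).indicator (fun _ => (1:ℝ)) u
          + (Set.Ioc (ti - L/2) (tj - L/2)).indicator (fun _ => (1:ℝ)) u
          + (Set.Ioc (0:ℝ) 0).indicator (fun _ => (1:ℝ)) u ≤ |Wf L ti u - Wf L tj u| := by
        intro u
        have e3 : (Set.Ioc (0:ℝ) 0).indicator (fun _ => (1:ℝ)) u = 0 :=
          Set.indicator_of_notMem (by simp) _
        by_cases b1 : u ∈ Set.Ioc ti tj
        · have hu1 : ti < u := b1.1
          have hu2 : u ≤ tj := b1.2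
          have e1 : (Set.Ioc ti tj).indicator (fun _ => (1:ℝ)) u = 1 := Set.indicator_of_mem b1 _
          have e2 : (Set.Ioc (ti - L/2) (tj - L/2)).indicator (fun _ => (1:ℝ)) u = 0 :=
            Set.indicator_of_notMem (by
              simp only [Set.mem_Ioc, not_and, not_le]; intro h; linarith) _
          have wi : Wf L ti u = 0 := Wf_not (by
            simp only [Set.mem_union, Set.mem_Ioc, not_or, not_and, not_le]
            exact ⟨fun h => by linarith, fun h => by linarith⟩)
          have wj : Wf L tj u = 1 := Wf_mem (Or.inl ⟨by linarith, by linarith⟩)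
          rw [e1, e2, e3, wi, wj]; norm_num
        · by_cases b2 : u ∈ Set.Ioc (ti - L/2) (tj - L/2)
          · have hu1 : ti - L/2 < u := b2.1
            have hu2 : u ≤ tj - L/2 := b2.2
            have e1 : (Set.Ioc ti tj).indicator (fun _ => (1:ℝ)) u = 0 :=
              Set.indicator_of_notMem (by
                simp only [Set.mem_Ioc, not_and, not_le]; intro h; linarith) _
            have e2 : (Set.Ioc (ti - L/2) (tj - L/2)).indicator (fun _ => (1:ℝ)) u = 1 :=
              Set.indicator_of_mem b2 _
            have wi : Wf L ti u = 1 := Wf_mem (Or.inl ⟨by linarith, by linarith⟩)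
            have wj : Wf L tj u = 0 := Wf_not (by
              simp only [Set.mem_union, Set.mem_Ioc, not_or, not_and, not_le]
              exact ⟨fun h => by linarith, fun h => by linarith⟩)
            rw [e1, e2, e3, wi, wj]; norm_num
          · have e1 : (Set.Ioc ti tj).indicator (fun _ => (1:ℝ)) u = 0 :=
              Set.indicator_of_notMem b1 _
            have e2 : (Set.Ioc (ti - L/2) (tj - L/2)).indicator (fun _ => (1:ℝ)) u = 0 :=
              Set.indicator_of_notMem b2 _
            rw [e1, e2, e3]; simp [abs_nonneg]
      have h3b := three_blocks (L := L) (ti := ti) (tj := tj) hL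
        h0i hij hjL (by linarith) (by linarith) (by linarith)
        le_rfl le_rfl hL hpt
      have hmin : min (tj - ti) (L - (tj - ti)) = tj - ti := min_eq_left (by linarith)
      rw [hmin]; linarith
    · -- ti ≤ L/2 ≤ tj
      rcases le_total (tj - ti) (L/2) with hg | hg
      · -- case c2 : gap ≤ L/2
        have hpt : ∀ u : ℝ, (Set.Ioc ti tj).indicator (fun _ => (1:ℝ)) u
            + (Set.Ioc (ti + L/2) L).indicator (fun _ => (1:ℝ)) u
            + (Set.Ioc (0:ℝ) (tj - L/2)).indicator (fun _ => (1:ℝ)) u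
            ≤ |Wf L ti u - Wf L tj u| := by
          intro u
          by_cases b1 : u ∈ Set.Ioc ti tj
          · have hu1 : ti < u := b1.1
            have hu2 : u ≤ tj := b1.2
            have e1 : (Set.Ioc ti tj).indicator (fun _ => (1:ℝ)) u = 1 :=
              Set.indicator_of_mem b1 _
            have e2 : (Set.Ioc (ti + L/2) L).indicator (fun _ => (1:ℝ)) u = 0 :=
              Set.indicator_of_notMem (by
                simp only [Set.mem_Ioc, not_and, not_le]; intro h; linarith) _
            have e3 : (Set.Ioc (0:ℝ) (tj - L/2)).indicator (fun _ => (1:ℝ)) u = 0 :=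
              Set.indicator_of_notMem (by
                simp only [Set.mem_Ioc, not_and, not_le]; intro h; linarith) _
            have wi : Wf L ti u = 0 := Wf_not (by
              simp only [Set.mem_union, Set.mem_Ioc, not_or, not_and, not_le]
              exact ⟨fun h => by linarith, fun h => by linarith⟩)
            have wj : Wf L tj u = 1 := Wf_mem (Or.inl ⟨by linarith, by linarith⟩)
            rw [e1, e2, e3, wi, wj]; norm_num
          · by_cases b2 : u ∈ Set.Ioc (ti + L/2) L
            · have hu1 : ti + L/2 < u := b2.1
              have hu2 : u ≤ L := b2.2
              have e1 : (Set.Ioc ti tj).indicator (fun _ => (1:ℝ)) u = 0 :=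
                Set.indicator_of_notMem (by
                  simp only [Set.mem_Ioc, not_and, not_le]; intro h; linarith) _
              have e2 : (Set.Ioc (ti + L/2) L).indicator (fun _ => (1:ℝ)) u = 1 :=
                Set.indicator_of_mem b2 _
              have e3 : (Set.Ioc (0:ℝ) (tj - L/2)).indicator (fun _ => (1:ℝ)) u = 0 :=
                Set.indicator_of_notMem (by
                  simp only [Set.mem_Ioc, not_and, not_le]; intro h; linarith) _
              have wi : Wf L ti u = 1 := Wf_mem (Or.inr ⟨by linarith, by linarith⟩)
              have wj : Wf L tj u = 0 := Wf_not (by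
                simp only [Set.mem_union, Set.mem_Ioc, not_or, not_and, not_le]
                exact ⟨fun h => by linarith, fun h => by linarith⟩)
              rw [e1, e2, e3, wi, wj]; norm_num
            · by_cases b3 : u ∈ Set.Ioc (0:ℝ) (tj - L/2)
              · have hu1 : (0:ℝ) < u := b3.1
                have hu2 : u ≤ tj - L/2 := b3.2
                have e1 : (Set.Ioc ti tj).indicator (fun _ => (1:ℝ)) u = 0 :=
                  Set.indicator_of_notMem (by
                    simp only [Set.mem_Ioc, not_and, not_le]; intro h; linarith) _
                have e2 : (Set.Ioc (ti + L/2) L).indicator (fun _ => (1:ℝ)) u = 0 :=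
                  Set.indicator_of_notMem (by
                    simp only [Set.mem_Ioc, not_and, not_le]; intro h; linarith) _
                have e3 : (Set.Ioc (0:ℝ) (tj - L/2)).indicator (fun _ => (1:ℝ)) u = 1 :=
                  Set.indicator_of_mem b3 _
                have wi : Wf L ti u = 1 := Wf_mem (Or.inl ⟨by linarith, by linarith⟩)
                have wj : Wf L tj u = 0 := Wf_not (by
                  simp only [Set.mem_union, Set.mem_Ioc, not_or, not_and, not_le]
                  exact ⟨fun h => by linarith, fun h => by linarith⟩)
                rw [e1, e2, e3, wi, wj]; norm_num
              · have e1 : (Set.Ioc ti tj).indicator (fun _ => (1:ℝ)) u = 0 :=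
                  Set.indicator_of_notMem b1 _
                have e2 : (Set.Ioc (ti + L/2) L).indicator (fun _ => (1:ℝ)) u = 0 :=
                  Set.indicator_of_notMem b2 _
                have e3 : (Set.Ioc (0:ℝ) (tj - L/2)).indicator (fun _ => (1:ℝ)) u = 0 :=
                  Set.indicator_of_notMem b3 _
                rw [e1, e2, e3]; simp [abs_nonneg]
        have h3b := three_blocks (L := L) (ti := ti) (tj := tj) hL
          h0i hij hjL (by linarith) (by linarith) le_rfl
          le_rfl (by linarith) (by linarith) hpt
        have hmin : min (tj - ti) (L - (tj - ti)) = tj - ti := min_eq_left (by linarith)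
        rw [hmin]; linarith
      · -- case c3 : gap ≥ L/2
        have hpt : ∀ u : ℝ, (Set.Ioc tj L).indicator (fun _ => (1:ℝ)) u
            + (Set.Ioc (0:ℝ) ti).indicator (fun _ => (1:ℝ)) u
            + (Set.Ioc (tj - L/2) (ti + L/2)).indicator (fun _ => (1:ℝ)) u
            ≤ |Wf L ti u - Wf L tj u| := by
          intro u
          by_cases b1 : u ∈ Set.Ioc tj L
          · have hu1 : tj < u := b1.1
            have hu2 : u ≤ L := b1.2
            have e1 : (Set.Ioc tj L).indicator (fun _ => (1:ℝ)) u = 1 :=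
              Set.indicator_of_mem b1 _
            have e2 : (Set.Ioc (0:ℝ) ti).indicator (fun _ => (1:ℝ)) u = 0 :=
              Set.indicator_of_notMem (by
                simp only [Set.mem_Ioc, not_and, not_le]; intro h; linarith) _
            have e3 : (Set.Ioc (tj - L/2) (ti + L/2)).indicator (fun _ => (1:ℝ)) u = 0 :=
              Set.indicator_of_notMem (by
                simp only [Set.mem_Ioc, not_and, not_le]; intro h; linarith) _
            have wi : Wf L ti u = 1 := Wf_mem (Or.inr ⟨by linarith, by linarith⟩)
            have wj : Wf L tj u = 0 := Wf_not (by
              simp only [Set.mem_union, Set.mem_Ioc, not_or, not_and, not_le]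
              exact ⟨fun h => by linarith, fun h => by linarith⟩)
            rw [e1, e2, e3, wi, wj]; norm_num
          · by_cases b2 : u ∈ Set.Ioc (0:ℝ) ti
            · have hu1 : (0:ℝ) < u := b2.1
              have hu2 : u ≤ ti := b2.2
              have e1 : (Set.Ioc tj L).indicator (fun _ => (1:ℝ)) u = 0 :=
                Set.indicator_of_notMem (by
                  simp only [Set.mem_Ioc, not_and, not_le]; intro h; linarith) _
              have e2 : (Set.Ioc (0:ℝ) ti).indicator (fun _ => (1:ℝ)) u = 1 :=
                Set.indicator_of_mem b2 _
              have e3 : (Set.Ioc (tj - L/2) (ti + L/2)).indicator (fun _ => (1:ℝ)) u = 0 :=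
                Set.indicator_of_notMem (by
                  simp only [Set.mem_Ioc, not_and, not_le]; intro h; linarith) _
              have wi : Wf L ti u = 1 := Wf_mem (Or.inl ⟨by linarith, by linarith⟩)
              have wj : Wf L tj u = 0 := Wf_not (by
                simp only [Set.mem_union, Set.mem_Ioc, not_or, not_and, not_le]
                exact ⟨fun h => by linarith, fun h => by linarith⟩)
              rw [e1, e2, e3, wi, wj]; norm_num
            · by_cases b3 : u ∈ Set.Ioc (tj - L/2) (ti + L/2)
              · have hu1 : tj - L/2 < u := b3.1
                have hu2 : u ≤ ti + L/2 := b3.2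
                have e1 : (Set.Ioc tj L).indicator (fun _ => (1:ℝ)) u = 0 :=
                  Set.indicator_of_notMem (by
                    simp only [Set.mem_Ioc, not_and, not_le]; intro h; linarith) _
                have e2 : (Set.Ioc (0:ℝ) ti).indicator (fun _ => (1:ℝ)) u = 0 :=
                  Set.indicator_of_notMem (by
                    simp only [Set.mem_Ioc, not_and, not_le]; intro h; linarith) _
                have e3 : (Set.Ioc (tj - L/2) (ti + L/2)).indicator (fun _ => (1:ℝ)) u = 1 :=
                  Set.indicator_of_mem b3 _
                have wi : Wf L ti u = 0 := Wf_not (by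
                  simp only [Set.mem_union, Set.mem_Ioc, not_or, not_and, not_le]
                  exact ⟨fun h => by linarith, fun h => by linarith⟩)
                have wj : Wf L tj u = 1 := Wf_mem (Or.inl ⟨by linarith, by linarith⟩)
                rw [e1, e2, e3, wi, wj]; norm_num
              · have e1 : (Set.Ioc tj L).indicator (fun _ => (1:ℝ)) u = 0 :=
                  Set.indicator_of_notMem b1 _
                have e2 : (Set.Ioc (0:ℝ) ti).indicator (fun _ => (1:ℝ)) u = 0 :=
                  Set.indicator_of_notMem b2 _
                have e3 : (Set.Ioc (tj - L/2) (ti + L/2)).indicator (fun _ => (1:ℝ)) u = 0 :=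
                  Set.indicator_of_notMem b3 _
                rw [e1, e2, e3]; simp [abs_nonneg]
        have h3b := three_blocks (L := L) (ti := ti) (tj := tj) hL
          (by linarith) hjL le_rfl
          le_rfl h0i (by linarith)
          (by linarith) (by linarith) (by linarith) hpt
        have hmin : min (tj - ti) (L - (tj - ti)) = L - (tj - ti) := min_eq_right (by linarith)
        rw [hmin]; linarith

lemma circle_bound {m : ℕ} (t lam : ℕ → ℝ) {L : ℝ} (hL : 0 ≤ L)
    (ht : ∀ i ∈ Finset.range m, 0 ≤ t i ∧ t i ≤ L)
    (hlam : ∀ i, 0 ≤ lam i) (hsum : ∑ i ∈ Finset.range m, lam i = 1) :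
    ∑ i ∈ Finset.range m, ∑ j ∈ Finset.range m,
      lam i * lam j * min |t i - t j| (L - |t i - t j|) ≤ L / 4 := by
  have pairint : ∀ i ∈ Finset.range m, ∀ j ∈ Finset.range m,
      2 * min |t i - t j| (L - |t i - t j|)
        ≤ ∫ u in (0:ℝ)..L, |Wf L (t i) u - Wf L (t j) u| := by
    intro i hi j hj
    rcases le_total (t i) (t j) with hij | hij
    · rw [abs_sub_comm, abs_of_nonneg (sub_nonneg.2 hij)]
      exact pair_le L (t i) (t j) (ht i hi).1 hij (ht j hj).2
    · rw [abs_of_nonneg (sub_nonneg.2 hij)]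
      have hcomm : (∫ u in (0:ℝ)..L, |Wf L (t i) u - Wf L (t j) u|)
          = ∫ u in (0:ℝ)..L, |Wf L (t j) u - Wf L (t i) u| := by
        apply intervalIntegral.integral_congr
        intro u _
        exact abs_sub_comm _ _
      rw [hcomm]
      exact pair_le L (t j) (t i) (ht j hj).1 hij (ht i hi).2
  have intgr : ∀ i j : ℕ, IntervalIntegrable
      (fun u => lam i * lam j * |Wf L (t i) u - Wf L (t j) u|) volume 0 L := by
    intro i j
    exact (((Wf_intervalIntegrable L (t i) 0 L).sub (Wf_intervalIntegrable L (t j) 0 L)).abs).const_mul _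
  have intgr2 : ∀ i : ℕ, IntervalIntegrable
      (fun u => ∑ j ∈ Finset.range m, lam i * lam j * |Wf L (t i) u - Wf L (t j) u|)
      volume 0 L := by
    intro i
    have h := IntervalIntegrable.sum (μ := volume) (a := (0:ℝ)) (b := L)
      (f := fun j u => lam i * lam j * |Wf L (t i) u - Wf L (t j) u|)
      (Finset.range m) (fun j _ => intgr i j)
    rwa [show (∑ j ∈ Finset.range m, fun u => lam i * lam j * |Wf L (t i) u - Wf L (t j) u|)
      = fun u => ∑ j ∈ Finset.range m, lam i * lam j * |Wf L (t i) u - Wf L (t j) u|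
      from funext (fun u => by simp)] at h
  have sum1 : ∑ i ∈ Finset.range m, ∑ j ∈ Finset.range m,
      lam i * lam j * (2 * min |t i - t j| (L - |t i - t j|))
      ≤ ∑ i ∈ Finset.range m, ∑ j ∈ Finset.range m,
        lam i * lam j * ∫ u in (0:ℝ)..L, |Wf L (t i) u - Wf L (t j) u| := by
    apply Finset.sum_le_sum
    intro i hi
    apply Finset.sum_le_sum
    intro j hj
    exact mul_le_mul_of_nonneg_left (pairint i hi j hj) (mul_nonneg (hlam i) (hlam j))
  have exch : (∫ u in (0:ℝ)..L, ∑ i ∈ Finset.range m, ∑ j ∈ Finset.range m,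
      lam i * lam j * |Wf L (t i) u - Wf L (t j) u|)
      = ∑ i ∈ Finset.range m, ∑ j ∈ Finset.range m,
          lam i * lam j * ∫ u in (0:ℝ)..L, |Wf L (t i) u - Wf L (t j) u| := by
    rw [intervalIntegral.integral_finset_sum
      (f := fun i u => ∑ j ∈ Finset.range m, lam i * lam j * |Wf L (t i) u - Wf L (t j) u|)
      (fun i _ => intgr2 i)]
    refine Finset.sum_congr rfl fun i _ => ?_
    rw [intervalIntegral.integral_finset_sum
      (f := fun j u => lam i * lam j * |Wf L (t i) u - Wf L (t j) u|)
      (fun j _ => intgr i j)]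
    refine Finset.sum_congr rfl fun j _ => ?_
    rw [intervalIntegral.integral_const_mul]
  have ptbd : ∀ u : ℝ, ∑ i ∈ Finset.range m, ∑ j ∈ Finset.range m,
      lam i * lam j * |Wf L (t i) u - Wf L (t j) u| ≤ 1/2 := by
    intro u
    set A := ∑ i ∈ Finset.range m, lam i * Wf L (t i) u with hA
    have inner : ∀ i ∈ Finset.range m, ∑ j ∈ Finset.range m,
        lam i * lam j * |Wf L (t i) u - Wf L (t j) u|
        = lam i * Wf L (t i) u + lam i * A - lam i * Wf L (t i) u * (2 * A) := by
      intro i _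
      have step : ∀ j ∈ Finset.range m, lam i * lam j * |Wf L (t i) u - Wf L (t j) u|
          = lam i * Wf L (t i) u * lam j + lam i * (lam j * Wf L (t j) u)
            - lam i * Wf L (t i) u * (2 * (lam j * Wf L (t j) u)) := by
        intro j _
        rcases (Wf_cases L (t i) u) with hwi | hwi <;>
          rcases (Wf_cases L (t j) u) with hwj | hwj <;>
            rw [hwi, hwj] <;> norm_num <;> ring
      rw [Finset.sum_congr rfl step, Finset.sum_sub_distrib, Finset.sum_add_distrib]
      simp only [← Finset.mul_sum]
      rw [hsum, mul_one, ← hA]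
    rw [Finset.sum_congr rfl inner, Finset.sum_sub_distrib, Finset.sum_add_distrib]
    simp only [← Finset.sum_mul]
    rw [← hA, hsum, one_mul]
    nlinarith [sq_nonneg (2 * A - 1)]
  have intsum : IntervalIntegrable (fun u => ∑ i ∈ Finset.range m, ∑ j ∈ Finset.range m,
      lam i * lam j * |Wf L (t i) u - Wf L (t j) u|) volume 0 L := by
    have h := IntervalIntegrable.sum (μ := volume) (a := (0:ℝ)) (b := L)
      (f := fun i u => ∑ j ∈ Finset.range m, lam i * lam j * |Wf L (t i) u - Wf L (t j) u|)
      (Finset.range m) (fun i _ => intgr2 i)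
    rwa [show (∑ i ∈ Finset.range m, fun u => ∑ j ∈ Finset.range m,
        lam i * lam j * |Wf L (t i) u - Wf L (t j) u|)
      = fun u => ∑ i ∈ Finset.range m, ∑ j ∈ Finset.range m,
        lam i * lam j * |Wf L (t i) u - Wf L (t j) u|
      from funext (fun u => by simp)] at h
  have final : ∫ u in (0:ℝ)..L, ∑ i ∈ Finset.range m, ∑ j ∈ Finset.range m,
      lam i * lam j * |Wf L (t i) u - Wf L (t j) u| ≤ L / 2 := by
    calc ∫ u in (0:ℝ)..L, ∑ i ∈ Finset.range m, ∑ j ∈ Finset.range m,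
        lam i * lam j * |Wf L (t i) u - Wf L (t j) u|
        ≤ ∫ _ in (0:ℝ)..L, (1/2 : ℝ) :=
          intervalIntegral.integral_mono_on hL intsum intervalIntegrable_const
            (fun u _ => ptbd u)
      _ = L / 2 := by
          rw [intervalIntegral.integral_const, smul_eq_mul, sub_zero]; ring
  have lhs2 : ∑ i ∈ Finset.range m, ∑ j ∈ Finset.range m,
      lam i * lam j * (2 * min |t i - t j| (L - |t i - t j|))
      = 2 * ∑ i ∈ Finset.range m, ∑ j ∈ Finset.range m,
        lam i * lam j * min |t i - t j| (L - |t i - t j|) := by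
    rw [Finset.mul_sum]
    apply Finset.sum_congr rfl
    intro i _
    rw [Finset.mul_sum]
    apply Finset.sum_congr rfl
    intro j _
    ring
  rw [lhs2] at sum1
  rw [← exch] at sum1
  linarith

end CircleLemma

section Chord

variable {n : ℕ}

lemma chord_bound (K : Set (EuclideanSpace ℝ (Fin n)))
    (gtri : ∀ a b : EuclideanSpace ℝ (Fin n), gauge K (a + b) ≤ gauge K a + gauge K b)
    (m : ℕ) (x : ℕ → EuclideanSpace ℝ (Fin n)) (i j : ℕ) (hij : i ≤ j) (hjm : j ≤ m) :
    gauge K (x (j % m) - x (i % m)) ≤ ∑ k ∈ Finset.Ico i j, gauge K (x ((k+1) % m) - x k) := by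
  revert hjm
  induction j, hij using Nat.le_induction with
  | base => intro _; simp [gauge_zero]
  | succ j hij ih =>
    intro hjm
    have hjm' : j ≤ m := Nat.le_of_succ_le hjm
    have hjlt : j < m := hjm
    have ihh := ih hjm'
    rw [Finset.sum_Ico_succ_top hij]
    have e : x ((j+1) % m) - x (i % m)
        = (x ((j+1) % m) - x (j % m)) + (x (j % m) - x (i % m)) := by abel
    have hxe : x (j % m) = x j := by rw [Nat.mod_eq_of_lt hjlt]
    calc gauge K (x ((j+1) % m) - x (i % m))
        ≤ gauge K (x ((j+1) % m) - x (j % m)) + gauge K (x (j % m) - x (i % m)) := by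
          rw [e]; exact gtri _ _
      _ ≤ gauge K (x ((j+1) % m) - x j) + ∑ k ∈ Finset.Ico i j, gauge K (x ((k+1) % m) - x k) := by
          rw [hxe] at ihh ⊢; exact add_le_add le_rfl ihh
      _ = (∑ k ∈ Finset.Ico i j, gauge K (x ((k+1) % m) - x k)) + gauge K (x ((j+1) % m) - x j) := by
          ring

end Chord

/-- The `K`-length of the closed polygon with vertices `x 0, …, x (m-1)`. -/
noncomputable def KLength {n : ℕ} (K : Set (EuclideanSpace ℝ (Fin n))) (m : ℕ)
    (x : ℕ → EuclideanSpace ℝ (Fin n)) : ℝ :=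
  ∑ i ∈ Finset.range m, gauge K (x ((i + 1) % m) - x i)

/-- If the vertices `x 0, …, x (m-1)` (`m ≥ 2`, consecutive vertices distinct) all lie
outside the interior of the centrally symmetric convex body `K` and `0` lies in their
convex hull, then the `K`-length of the closed polygon through them is at least `4`. -/
theorem stmt3 {n m : ℕ} (K : Set (EuclideanSpace ℝ (Fin n)))
    (hKconv : Convex ℝ K) (hKcpt : IsCompact K) (hK0 : (0 : EuclideanSpace ℝ (Fin n)) ∈ interior K)
    (hKsymm : K = -K) (hm : 2 ≤ m)
    (x : ℕ → EuclideanSpace ℝ (Fin n))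
    (hout : ∀ i < m, 1 ≤ gauge K (x i))
    (hdist : ∀ i < m, x ((i + 1) % m) ≠ x i)
    (h0 : (0 : EuclideanSpace ℝ (Fin n)) ∈ convexHull ℝ (x '' Set.Iio m)) :
    4 ≤ KLength K m x := by

  classical
  have habs : Absorbent ℝ K := absorbent_nhds_zero (mem_interior_iff_mem_nhds.mp hK0)
  have hsymm' : ∀ y ∈ K, -y ∈ K := by
    intro y hy
    rw [hKsymm]
    exact Set.neg_mem_neg.mpr hy
  have gtri : ∀ a b : EuclideanSpace ℝ (Fin n), gauge K (a + b) ≤ gauge K a + gauge K b :=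
    gauge_add_le hKconv habs
  have gsym : ∀ v : EuclideanSpace ℝ (Fin n), gauge K (-v) = gauge K v := gauge_neg hsymm'
  set T : ℕ → ℝ := fun i => ∑ k ∈ Finset.range i, gauge K (x ((k + 1) % m) - x k) with hTdef
  have hKL : KLength K m x = T m := rfl
  have ℓnn : ∀ k : ℕ, 0 ≤ gauge K (x ((k + 1) % m) - x k) := fun k => gauge_nonneg _
  have Tnn : ∀ i, 0 ≤ T i := fun i => Finset.sum_nonneg fun k _ => ℓnn k
  have Tmono : ∀ {i j : ℕ}, i ≤ j → T i ≤ T j := by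
    intro i j hij
    exact Finset.sum_le_sum_of_subset_of_nonneg (Finset.range_subset_range.2 hij) (fun k _ _ => ℓnn k)
  have hT0 : T 0 = 0 := Finset.sum_range_zero _
  have hchord : ∀ i j : ℕ, i ≤ j → j ≤ m →
      gauge K (x (j % m) - x (i % m)) ≤ T j - T i := by
    intro i j hij hjm
    have h := chord_bound K gtri m x i j hij hjm
    rwa [Finset.sum_Ico_eq_sub _ hij] at h
  -- extract convex weights
  rw [_root_.convexHull_eq] at h0
  simp only [Set.mem_setOf_eq] at h0
  obtain ⟨ι, ts, w, z, hw0, hw1, hz, hcm⟩ := h0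
  have hrep : ∀ i ∈ ts, ∃ k, k < m ∧ x k = z i := by
    intro i hi
    obtain ⟨k, hk, he⟩ := hz i hi
    exact ⟨k, hk, he⟩
  set r : ι → ℕ := fun i => if h : i ∈ ts then (hrep i h).choose else 0 with hrdef
  have hrspec : ∀ i ∈ ts, r i < m ∧ x (r i) = z i := by
    intro i hi
    simp only [hrdef, dif_pos hi]
    exact (hrep i hi).choose_spec
  set lam : ℕ → ℝ := fun k => ∑ i ∈ ts.filter (fun i => r i = k), w i with hlamdef
  have hlam0 : ∀ k, 0 ≤ lam k := by
    intro k
    apply Finset.sum_nonneg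
    intro i hi
    exact hw0 i (Finset.mem_filter.1 hi).1
  have hmaps : ∀ i ∈ ts, r i ∈ Finset.range m := fun i hi => Finset.mem_range.2 (hrspec i hi).1
  have hlamsum : ∑ k ∈ Finset.range m, lam k = 1 :=
    (Finset.sum_fiberwise_of_maps_to hmaps w).trans hw1
  have hz0 : ∑ i ∈ ts, w i • z i = 0 := by
    rw [← Finset.centerMass_eq_of_sum_1 _ _ hw1]
    exact hcm
  have hlz : ∑ k ∈ Finset.range m, lam k • x k = 0 := by
    calc ∑ k ∈ Finset.range m, lam k • x k
        = ∑ k ∈ Finset.range m, ∑ i ∈ ts.filter (fun i => r i = k), w i • x k := by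
          refine Finset.sum_congr rfl fun k _ => ?_
          rw [Finset.sum_smul]
      _ = ∑ k ∈ Finset.range m, ∑ i ∈ ts.filter (fun i => r i = k), w i • z i := by
          refine Finset.sum_congr rfl fun k _ => Finset.sum_congr rfl fun i hi => ?_
          obtain ⟨hits, hrik⟩ := Finset.mem_filter.1 hi
          rw [← hrik, (hrspec i hits).2]
      _ = ∑ i ∈ ts, w i • z i := Finset.sum_fiberwise_of_maps_to hmaps _
      _ = 0 := hz0
  -- per-vertex inequality
  have key_i : ∀ i ∈ Finset.range m,
      gauge K (x i) ≤ ∑ j ∈ Finset.range m, lam j * gauge K (x i - x j) := by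
    intro i _
    have hxi : ∑ j ∈ Finset.range m, lam j • (x i - x j) = x i := by
      calc ∑ j ∈ Finset.range m, lam j • (x i - x j)
          = ∑ j ∈ Finset.range m, (lam j • x i - lam j • x j) :=
            Finset.sum_congr rfl fun j _ => smul_sub _ _ _
        _ = (∑ j ∈ Finset.range m, lam j • x i) - ∑ j ∈ Finset.range m, lam j • x j :=
            Finset.sum_sub_distrib _ _
        _ = x i := by rw [← Finset.sum_smul, hlamsum, one_smul, hlz, sub_zero]
    calc gauge K (x i) = gauge K (∑ j ∈ Finset.range m, lam j • (x i - x j)) := by rw [hxi]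
      _ ≤ ∑ j ∈ Finset.range m, gauge K (lam j • (x i - x j)) :=
          Finset.le_sum_of_subadditive (gauge K) gauge_zero.le gtri _ _
      _ = ∑ j ∈ Finset.range m, lam j * gauge K (x i - x j) := by
          refine Finset.sum_congr rfl fun j _ => ?_
          rw [gauge_smul_of_nonneg (hlam0 j), smul_eq_mul]
  -- ordered pair bound
  have ordered : ∀ i j : ℕ, i ∈ Finset.range m → j ∈ Finset.range m → i ≤ j →
      gauge K (x i - x j) ≤ min (T j - T i) (T m - (T j - T i)) := by
    intro i j hi hj hij
    have him : i < m := Finset.mem_range.1 hi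
    have hjm : j < m := Finset.mem_range.1 hj
    apply le_min
    · have hsy : gauge K (x i - x j) = gauge K (x j - x i) := by rw [← neg_sub, gsym]
      rw [hsy]
      have h := hchord i j hij (le_of_lt hjm)
      rwa [Nat.mod_eq_of_lt hjm, Nat.mod_eq_of_lt him] at h
    · have h1 : gauge K (x i - x 0) ≤ T i := by
        have h := hchord 0 i (Nat.zero_le i) (le_of_lt him)
        rw [Nat.zero_mod, Nat.mod_eq_of_lt him, hT0, sub_zero] at h
        exact h
      have h2 : gauge K (x 0 - x j) ≤ T m - T j := by
        have h := hchord j m (le_of_lt hjm) le_rfl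
        rwa [Nat.mod_self, Nat.mod_eq_of_lt hjm] at h
      calc gauge K (x i - x j) = gauge K ((x i - x 0) + (x 0 - x j)) := by rw [sub_add_sub_cancel]
        _ ≤ gauge K (x i - x 0) + gauge K (x 0 - x j) := gtri _ _
        _ ≤ T i + (T m - T j) := add_le_add h1 h2
        _ = T m - (T j - T i) := by ring
  have pairbound : ∀ i ∈ Finset.range m, ∀ j ∈ Finset.range m,
      gauge K (x i - x j) ≤ min |T i - T j| (T m - |T i - T j|) := by
    intro i hi j hj
    rcases le_total i j with hij | hij
    · rw [abs_sub_comm, abs_of_nonneg (sub_nonneg.2 (Tmono hij))]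
      exact ordered i j hi hj hij
    · rw [abs_of_nonneg (sub_nonneg.2 (Tmono hij))]
      have hsy : gauge K (x i - x j) = gauge K (x j - x i) := by rw [← neg_sub, gsym]
      rw [hsy]
      exact ordered j i hj hi hij
  -- combine
  have step1 : (1:ℝ) ≤ ∑ i ∈ Finset.range m, ∑ j ∈ Finset.range m,
      lam i * lam j * gauge K (x i - x j) := by
    calc (1:ℝ) = ∑ i ∈ Finset.range m, lam i := hlamsum.symm
      _ ≤ ∑ i ∈ Finset.range m, lam i * gauge K (x i) := by
          apply Finset.sum_le_sum
          intro i hi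
          calc lam i = lam i * 1 := (mul_one _).symm
            _ ≤ lam i * gauge K (x i) :=
                mul_le_mul_of_nonneg_left (hout i (Finset.mem_range.1 hi)) (hlam0 i)
      _ ≤ ∑ i ∈ Finset.range m, lam i * ∑ j ∈ Finset.range m, lam j * gauge K (x i - x j) :=
          Finset.sum_le_sum fun i hi => mul_le_mul_of_nonneg_left (key_i i hi) (hlam0 i)
      _ = ∑ i ∈ Finset.range m, ∑ j ∈ Finset.range m, lam i * lam j * gauge K (x i - x j) := by
          refine Finset.sum_congr rfl fun i _ => ?_
          rw [Finset.mul_sum]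
          exact Finset.sum_congr rfl fun j _ => by ring
  have step2 : ∑ i ∈ Finset.range m, ∑ j ∈ Finset.range m,
      lam i * lam j * gauge K (x i - x j)
      ≤ ∑ i ∈ Finset.range m, ∑ j ∈ Finset.range m,
        lam i * lam j * min |T i - T j| (T m - |T i - T j|) :=
    Finset.sum_le_sum fun i hi => Finset.sum_le_sum fun j hj =>
      mul_le_mul_of_nonneg_left (pairbound i hi j hj) (mul_nonneg (hlam0 i) (hlam0 j))
  have step3 := circle_bound T lam (Tnn m)
    (fun i hi => ⟨Tnn i, Tmono (le_of_lt (Finset.mem_range.1 hi))⟩) hlam0 hlamsum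
  rw [hKL]
  linarith
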